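/- Let M = (m_{ij}) be a symmetric matrix with m_{ij} ≥ 2 for all i ≠ j, and set b_{ij} = a_{ij}^{m_{ij}} ∈ Br_n, with the conventions a_{ji} = a_{ij} and b_{ji} = b_{ij}. Then for all triples i,j,k in cyclic order (i.e. i<j<k, j<k<i, or k<i<j) with m_{ij} = m_{ik} = 2 and m_{jk} = 2ν+1 for an integer ν ≥ 1, the relations b_{ik} (b_{ij} b_{ik})^{ν−1} b_{jk} b_{ij} b_{ik} = (b_{ij} b_{ik})^{ν} b_{jk} b_{ij} = b_{ik} (b_{ij} b_{ik})^{ν} b_{jk} hold in Br_n. -/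

import Mathlib

def braidRels (n : ℕ) : Set (FreeGroup ℕ) :=
  {r | (∃ i, 1 ≤ i ∧ i + 2 ≤ n ∧
        r = FreeGroup.of i * FreeGroup.of (i+1) * FreeGroup.of i *
            (FreeGroup.of (i+1) * FreeGroup.of i * FreeGroup.of (i+1))⁻¹) ∨
       (∃ i j, 1 ≤ i ∧ i + 2 ≤ j ∧ j + 1 ≤ n ∧
        r = FreeGroup.of i * FreeGroup.of j * (FreeGroup.of j * FreeGroup.of i)⁻¹) ∨
       (∃ i, (i = 0 ∨ n ≤ i) ∧ r = FreeGroup.of i)}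

abbrev BraidGroup (n : ℕ) := PresentedGroup (braidRels n)

def braidGen (n i : ℕ) : BraidGroup n := PresentedGroup.of i

lemma braid_rel_one {n : ℕ} {r : FreeGroup ℕ} (h : r ∈ braidRels n) :
    PresentedGroup.mk (braidRels n) r = 1 :=
  (QuotientGroup.eq_one_iff r).mpr (Subgroup.subset_normalClosure h)

lemma braid_braid {n i : ℕ} (h1 : 1 ≤ i) (h2 : i + 2 ≤ n) :
    braidGen n i * braidGen n (i+1) * braidGen n i
      = braidGen n (i+1) * braidGen n i * braidGen n (i+1) := by
  have := braid_rel_one (n := n)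
    (r := FreeGroup.of i * FreeGroup.of (i+1) * FreeGroup.of i *
            (FreeGroup.of (i+1) * FreeGroup.of i * FreeGroup.of (i+1))⁻¹)
    (Or.inl ⟨i, h1, h2, rfl⟩)
  simp only [map_mul, map_inv] at this
  rw [mul_inv_eq_one] at this
  exact this

lemma braid_comm {n i j : ℕ} (h1 : 1 ≤ i) (h2 : i + 2 ≤ j) (h3 : j + 1 ≤ n) :
    braidGen n i * braidGen n j = braidGen n j * braidGen n i := by
  have := braid_rel_one (n := n)
    (r := FreeGroup.of i * FreeGroup.of j * (FreeGroup.of j * FreeGroup.of i)⁻¹)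
    (Or.inr (Or.inl ⟨i, j, h1, h2, h3, rfl⟩))
  simp only [map_mul, map_inv] at this
  rw [mul_inv_eq_one] at this
  exact this

def band (n i j : ℕ) : BraidGroup n :=
  (((List.range (j - 1 - i)).map (fun t => braidGen n (j - 1 - t))).prod) * braidGen n i *
  (((List.range (j - 1 - i)).map (fun t => braidGen n (j - 1 - t))).prod)⁻¹

/-- `chainProd n q r = σ_{r-1} σ_{r-2} ⋯ σ_q` (empty if `r ≤ q`). -/
def chainProd (n q r : ℕ) : BraidGroup n :=
  (((List.range (r - q)).map (fun t => braidGen n (r - 1 - t))).prod)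

lemma band_eq (n i j : ℕ) :
    band n i j = chainProd n (i+1) j * braidGen n i * (chainProd n (i+1) j)⁻¹ := by
  unfold band chainProd
  rw [Nat.sub_sub, Nat.add_comm 1 i]

lemma chainProd_self (n q : ℕ) : chainProd n q q = 1 := by
  simp [chainProd]

lemma chainProd_succ (n : ℕ) {q r : ℕ} (h : q ≤ r) :
    chainProd n q (r+1) = braidGen n r * chainProd n q r := by
  unfold chainProd
  have h1 : r + 1 - q = (r - q) + 1 := by omega
  rw [h1, List.range_succ_eq_map, List.map_cons, List.prod_cons, List.map_map]
  have hf : ((fun t => braidGen n (r + 1 - 1 - t)) ∘ Nat.succ) = (fun t => braidGen n (r - 1 - t)) := by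
    funext t
    simp only [Function.comp]
    congr 1
    omega
  rw [hf]
  norm_num

lemma band_base (n i : ℕ) : band n i (i+1) = braidGen n i := by
  rw [band_eq, chainProd_self]
  simp

lemma band_succ (n : ℕ) {i j : ℕ} (h : i + 1 ≤ j) :
    band n i (j+1) = braidGen n j * band n i j * (braidGen n j)⁻¹ := by
  rw [band_eq, band_eq, chainProd_succ n h]
  group


section GroupHelpers
variable {G : Type*} [Group G]

lemma relw2 {a b c d : G} (h : a * b = c * d) : ∀ w : G, a * (b * w) = c * (d * w) := by
  intro w
  rw [← mul_assoc, ← mul_assoc, h]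

lemma relw3 {a b c d e f : G} (h : a * b * c = d * e * f) :
    ∀ w : G, a * (b * (c * w)) = d * (e * (f * w)) := by
  intro w
  calc a * (b * (c * w)) = (a * b * c) * w := by simp only [mul_assoc]
    _ = (d * e * f) * w := by rw [h]
    _ = d * (e * (f * w)) := by simp only [mul_assoc]

lemma comm_inv_left {g s : G} (h : g * s = s * g) : g * s⁻¹ = s⁻¹ * g := by
  calc g * s⁻¹ = s⁻¹ * (s * g) * s⁻¹ := by group
    _ = s⁻¹ * (g * s) * s⁻¹ := by rw [h]
    _ = s⁻¹ * g := by group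

lemma conj_comm_of_comm {g s b : G} (h1 : g * s = s * g) (h2 : g * b = b * g) :
    g * (s * b * s⁻¹) = (s * b * s⁻¹) * g := by
  have h1' := comm_inv_left h1
  calc g * (s * b * s⁻¹) = (g * s) * b * s⁻¹ := by simp only [mul_assoc]
    _ = (s * g) * b * s⁻¹ := by rw [h1]
    _ = s * (g * b) * s⁻¹ := by simp only [mul_assoc]
    _ = s * (b * g) * s⁻¹ := by rw [h2]
    _ = s * b * (g * s⁻¹) := by simp only [mul_assoc]
    _ = s * b * (s⁻¹ * g) := by rw [h1']
    _ = (s * b * s⁻¹) * g := by simp only [mul_assoc]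

/-- If `sbs = bsb`, `sts = tst` and `t` commutes with `b`, then the braid relation
`t c t = c t c` holds for `c = s b s⁻¹`. -/
lemma braid_conj_step {s t b : G} (hbr : s * b * s = b * s * b) (hst : s * t * s = t * s * t)
    (htb : t * b = b * t) :
    t * (s * b * s⁻¹) * t = (s * b * s⁻¹) * t * (s * b * s⁻¹) := by
  have F3 : ∀ w : G, b * (s * (b * w)) = s * (b * (s * w)) := relw3 hbr.symm
  have F4 : ∀ w : G, s * (t * (s * w)) = t * (s * (t * w)) := relw3 hst
  have F5 : ∀ w : G, t * (b * w) = b * (t * w) := relw2 htb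
  have F1 : ∀ w : G, s⁻¹ * (t * (s * w)) = t * (s * (t⁻¹ * w)) := by
    intro w
    have h := F4 (t⁻¹ * w)
    rw [mul_inv_cancel_left] at h
    rw [← h, inv_mul_cancel_left]
  have F2 : ∀ w : G, t⁻¹ * (b * w) = b * (t⁻¹ * w) := relw2 (comm_inv_left htb.symm).symm
  suffices H : ∀ w : G, t * (s * (b * (s⁻¹ * (t * w)))) =
      s * (b * (s⁻¹ * (t * (s * (b * (s⁻¹ * w)))))) by
    have := H 1
    simp only [mul_one] at this
    calc t * (s * b * s⁻¹) * t = t * (s * (b * (s⁻¹ * (t * 1)))) := by group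
      _ = s * (b * (s⁻¹ * (t * (s * (b * (s⁻¹ * 1)))))) := H 1
      _ = (s * b * s⁻¹) * t * (s * b * s⁻¹) := by group
  intro w
  rw [F1, F2, ← F5, F3, F4, F5, ← F1, mul_inv_cancel_left]
end GroupHelpers

/-- `σ_m` commutes with `a_{pq}` whenever `m ≥ q + 1`. -/
lemma gen_comm_band (n : ℕ) {p m : ℕ} (hp : 1 ≤ p) (hm : m + 1 ≤ n) :
    ∀ q, p < q → q + 1 ≤ m →
      braidGen n m * band n p q = band n p q * braidGen n m := by
  intro q
  induction q using Nat.strong_induction_on with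
  | _ q ih =>
    intro hpq hqm
    rcases Nat.lt_or_ge p (q - 1) with h | h
    · have hq1 : q = (q - 1) + 1 := by omega
      rw [hq1, band_succ n (by omega : p + 1 ≤ q - 1)]
      exact conj_comm_of_comm
        (braid_comm (by omega) (by omega) hm).symm
        (ih (q-1) (by omega) (by omega) (by omega))
    · have hq : q = p + 1 := by omega
      rw [hq, band_base]
      exact (braid_comm hp (by omega) hm).symm

/-- Lemma A: the braid relation between `σ_q` and `a_{pq}`. -/
lemma gen_braid_band (n : ℕ) {p : ℕ} (hp : 1 ≤ p) :
    ∀ q, p < q → q + 1 ≤ n →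
      braidGen n q * band n p q * braidGen n q = band n p q * braidGen n q * band n p q := by
  intro q
  induction q using Nat.strong_induction_on with
  | _ q ih =>
    intro hpq hqn
    rcases Nat.lt_or_ge p (q - 1) with h | h
    · have hq1 : q = (q - 1) + 1 := by omega
      rw [hq1, band_succ n (by omega : p + 1 ≤ q - 1)]
      have hbr := ih (q-1) (by omega) (by omega) (by omega)
      have hst := braid_braid (n := n) (i := q-1) (by omega) (by omega)
      have htb := gen_comm_band n (m := (q-1)+1) hp (by omega) (q-1) (by omega) (by omega)
      exact braid_conj_step hbr hst htb
    · have hq : q = p + 1 := by omega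
      rw [hq, band_base]
      exact (braid_braid (n := n) (i := p) hp (by omega)).symm

/-- Lemma C: `a_{pr} = C_{q,r} a_{pq} C_{q,r}⁻¹` for `p < q ≤ r`. -/
lemma band_conj_chain (n : ℕ) {p q : ℕ} (hpq : p < q) :
    ∀ r, q ≤ r → band n p r = chainProd n q r * band n p q * (chainProd n q r)⁻¹ := by
  intro r
  induction r with
  | zero => intro h; interval_cases q <;> omega
  | succ r ihr =>
    intro h
    rcases Nat.lt_or_ge r q with h2 | h2
    · have : q = r + 1 := by omega
      subst this
      rw [chainProd_self]
      group
    · rw [band_succ n (by omega : p + 1 ≤ r), ihr h2, chainProd_succ n h2]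
      group

/-- The bottom split of the chain: `C_{q,r} = C_{q+1,r} σ_q` for `q < r`. -/
lemma chainProd_split (n : ℕ) {q : ℕ} :
    ∀ r, q < r → chainProd n q r = chainProd n (q+1) r * braidGen n q := by
  intro r
  induction r with
  | zero => omega
  | succ r ihr =>
    intro h
    rcases Nat.lt_or_ge q r with h2 | h2
    · rw [chainProd_succ n (by omega : q ≤ r), chainProd_succ n (by omega : q + 1 ≤ r),
        ihr h2, mul_assoc]
    · have : r = q := by omega
      subst this
      rw [chainProd_succ n (le_refl r), chainProd_self, chainProd_self]
      group

/-- `a_{qr} = C_{q,r} σ_q C_{q,r}⁻¹` for `q < r`. -/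
lemma band_eq_chain_conj (n : ℕ) {q r : ℕ} (h : q < r) :
    band n q r = chainProd n q r * braidGen n q * (chainProd n q r)⁻¹ := by
  rw [band_eq, chainProd_split n r h]
  group

/-- The chain `C_{q+1,r}` commutes with `a_{pq}`. -/
lemma chain_comm_band (n : ℕ) {p q : ℕ} (hp : 1 ≤ p) (hpq : p < q) :
    ∀ r, r ≤ n → chainProd n (q+1) r * band n p q = band n p q * chainProd n (q+1) r := by
  intro r
  induction r with
  | zero => intro _; rw [chainProd]; simp
  | succ r ihr =>
    intro h
    rcases Nat.lt_or_ge r (q+1) with h2 | h2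
    · rw [chainProd]
      have : r + 1 - (q + 1) = 0 := by omega
      rw [this]
      simp
    · rw [chainProd_succ n h2, mul_assoc, ihr (by omega), ← mul_assoc,
        gen_comm_band n hp (by omega : r + 1 ≤ n) q hpq (by omega), mul_assoc]

/-- The fundamental band relations: for `p < q < r ≤ n`,
`a_{qr} a_{pq} = a_{pq} a_{pr}` and `a_{pq} a_{pr} = a_{pr} a_{qr}`. -/
lemma band_triple (n : ℕ) {p q r : ℕ} (hp : 1 ≤ p) (hpq : p < q) (hqr : q < r) (hrn : r ≤ n) :
    band n q r * band n p q = band n p q * band n p r ∧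
    band n p q * band n p r = band n p r * band n q r := by
  set x := band n p q with hx
  set s := braidGen n q with hs
  set F := chainProd n (q+1) r with hF
  have hz : band n p r = F * (s * x * s⁻¹) * F⁻¹ := by
    rw [band_conj_chain n hpq r (le_of_lt hqr), chainProd_split n r hqr]
    simp only [hF, hs, hx]
    group
  have hy : band n q r = F * s * F⁻¹ := by
    rw [band_eq_chain_conj n hqr, chainProd_split n r hqr]
    simp only [hF, hs, hx]
    group
  have hFx : F * x = x * F := chain_comm_band n hp hpq r hrn
  have hxF : x * F⁻¹ = F⁻¹ * x := comm_inv_left hFx.symm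
  have hA : s * x * s = x * s * x :=
    gen_braid_band n hp q hpq (by omega)
  constructor
  · -- y x = x z
    rw [hy, hz]
    calc F * s * F⁻¹ * x = F * s * (F⁻¹ * x) := by simp only [mul_assoc]
      _ = F * s * (x * F⁻¹) := by rw [← hxF]
      _ = F * (s * x * s⁻¹ * s) * F⁻¹ := by group
      _ = F * ((x * s * x) * s⁻¹ * s⁻¹ * s) * F⁻¹ := by rw [← hA]; group
      _ = F * (x * (s * x * s⁻¹)) * F⁻¹ := by group
      _ = (F * x) * (s * x * s⁻¹) * F⁻¹ := by simp only [mul_assoc]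
      _ = (x * F) * (s * x * s⁻¹) * F⁻¹ := by rw [hFx]
      _ = x * (F * (s * x * s⁻¹) * F⁻¹) := by simp only [mul_assoc]
  · -- x z = z y
    rw [hy, hz]
    calc x * (F * (s * x * s⁻¹) * F⁻¹)
        = (x * F) * (s * x * s⁻¹) * F⁻¹ := by simp only [mul_assoc]
      _ = (F * x) * (s * x * s⁻¹) * F⁻¹ := by rw [← hFx]
      _ = F * ((x * s * x) * s⁻¹) * F⁻¹ := by group
      _ = F * ((s * x * s) * s⁻¹) * F⁻¹ := by rw [← hA]
      _ = F * (s * x * s⁻¹ * s) * F⁻¹ := by group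
      _ = F * (s * x * s⁻¹) * (F⁻¹ * F) * s * F⁻¹ := by group
      _ = F * (s * x * s⁻¹) * F⁻¹ * (F * s * F⁻¹) := by simp only [mul_assoc]

section CrispParis
variable {G : Type*} [Group G]

lemma crisp_paris (x y z : G) (h1 : y * x = x * z) (h2 : x * z = z * y) (μ : ℕ) :
    z^2 * (x^2 * z^2)^μ * y^(2*(μ+1)+1) * x^2 * z^2
        = (x^2 * z^2)^(μ+1) * y^(2*(μ+1)+1) * x^2 ∧
    (x^2 * z^2)^(μ+1) * y^(2*(μ+1)+1) * x^2
        = z^2 * (x^2 * z^2)^(μ+1) * y^(2*(μ+1)+1) := by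
  have hzd : z * (x * z) = (x * z) * x := by
    calc z * (x * z) = z * (y * x) := by rw [← h1]
      _ = (z * y) * x := by rw [mul_assoc]
      _ = (x * z) * x := by rw [← h2]
  have hxd : x * (x * z) = (x * z) * y := by
    calc x * (x * z) = x * (z * y) := by rw [h2]
      _ = (x * z) * y := by rw [mul_assoc]
  have hyd : y * (x * z) = (x * z) * z := by
    calc y * (x * z) = (y * x) * z := by rw [mul_assoc]
      _ = (x * z) * z := by rw [h1]
  set d := x * z with hdd
  have rz : ∀ w : G, z * (d * w) = d * (x * w) := relw2 hzd
  have rx : ∀ w : G, x * (d * w) = d * (y * w) := relw2 hxd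
  have ry : ∀ w : G, y * (d * w) = d * (z * w) := relw2 hyd
  have Cy : Commute y (d * (d * d)) := by
    show y * (d * (d * d)) = (d * (d * d)) * y
    rw [ry, rz, hxd]
    simp only [mul_assoc]
  have Cz : Commute z (d * (d * d)) := by
    show z * (d * (d * d)) = (d * (d * d)) * z
    rw [rz, rx, hyd]
    simp only [mul_assoc]
  have hx2z2 : x^2 * z^2 = x * (d * z) := by
    rw [hdd, pow_two, pow_two]
    simp only [mul_assoc]
  have K2 : y * (y * (x^2 * z^2)) = d * (d * d) := by
    rw [hx2z2]
    calc y * (y * (x * (d * z))) = y * ((y * x) * (d * z)) := by simp only [mul_assoc]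
      _ = y * (d * (d * z)) := by rw [h1]
      _ = d * (z * (d * z)) := ry _
      _ = d * (d * (x * z)) := by rw [rz]
      _ = d * (d * d) := by rw [← hdd]
  have K2' : x^2 * z^2 = (y⁻¹ * y⁻¹) * (d * (d * d)) := by rw [← K2]; group
  have CQ : Commute (y⁻¹ * y⁻¹) (d * (d * d)) := (Cy.inv_left).mul_left (Cy.inv_left)
  have hP : ∀ k : ℕ, (x^2 * z^2)^k = (y⁻¹ * y⁻¹)^k * (d * (d * d))^k := fun k => by
    rw [K2', CQ.mul_pow]
  have hQy : ∀ k : ℕ, (y⁻¹ * y⁻¹)^k * y^(2*k+1) = y := fun k => by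
    have e1 : (y⁻¹ * y⁻¹)^k = (y^(2*k))⁻¹ := by
      rw [← mul_inv_rev, ← pow_two, inv_pow, ← pow_mul]
    rw [e1, pow_succ, ← mul_assoc, inv_mul_cancel, one_mul]
  have hPB : ∀ k : ℕ, (x^2 * z^2)^k * y^(2*k+1) = (d * (d * d))^k * y := fun k => by
    have hc : (d * (d * d))^k * y^(2*k+1) = y^(2*k+1) * (d * (d * d))^k :=
      (Cy.symm.pow_pow k (2*k+1)).eq
    calc (x^2 * z^2)^k * y^(2*k+1)
        = (y⁻¹ * y⁻¹)^k * ((d * (d * d))^k * y^(2*k+1)) := by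
          rw [hP k]; simp only [mul_assoc]
      _ = (y⁻¹ * y⁻¹)^k * (y^(2*k+1) * (d * (d * d))^k) := by rw [hc]
      _ = ((y⁻¹ * y⁻¹)^k * y^(2*k+1)) * (d * (d * d))^k := by simp only [mul_assoc]
      _ = y * (d * (d * d))^k := by rw [hQy k]
      _ = (d * (d * d))^k * y := (Cy.pow_right k).eq
  have K1 : z^2 * y = y * x^2 := by
    calc z^2 * y = z * (z * y) := by rw [pow_two, mul_assoc]
      _ = z * d := by rw [← h2]
      _ = d * x := hzd
      _ = (y * x) * x := by rw [h1]
      _ = y * x^2 := by rw [pow_two, mul_assoc]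
  have CZ2 : ∀ k : ℕ, z^2 * (d * (d * d))^k = (d * (d * d))^k * z^2 := fun k =>
    (Cz.pow_pow 2 k).eq
  have hmain : ∀ k : ℕ, (x^2 * z^2)^(k+1) * y^(2*(k+1)+1) * x^2 = (d * (d * d))^(k+1) * y * x^2 :=
    fun k => by rw [hPB (k+1)]
  constructor
  · -- first relation
    have lhs_eq : z^2 * (x^2 * z^2)^μ * y^(2*(μ+1)+1) * x^2 * z^2
        = (d * (d * d))^(μ+1) * y * x^2 := by
      have hexp : 2*(μ+1)+1 = (2*μ+1) + 2 := by omega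
      calc z^2 * (x^2 * z^2)^μ * y^(2*(μ+1)+1) * x^2 * z^2
          = z^2 * (((x^2 * z^2)^μ * y^(2*μ+1)) * (y * (y * (x^2 * z^2)))) := by
            rw [hexp, pow_add]
            simp only [pow_two, mul_assoc]
        _ = z^2 * (((d * (d * d))^μ * y) * (d * (d * d))) := by rw [hPB μ, K2]
        _ = z^2 * ((d * (d * d))^μ * (d * (d * d)) * y) := by
            have : y * (d * (d * d)) = (d * (d * d)) * y := Cy.eq
            rw [mul_assoc ((d * (d * d))^μ), this]
            simp only [mul_assoc]
        _ = z^2 * ((d * (d * d))^(μ+1) * y) := by rw [pow_succ (d * (d * d)) μ]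
        _ = (z^2 * (d * (d * d))^(μ+1)) * y := by simp only [mul_assoc]
        _ = ((d * (d * d))^(μ+1) * z^2) * y := by rw [CZ2 (μ+1)]
        _ = (d * (d * d))^(μ+1) * (z^2 * y) := by simp only [mul_assoc]
        _ = (d * (d * d))^(μ+1) * (y * x^2) := by rw [K1]
        _ = (d * (d * d))^(μ+1) * y * x^2 := by simp only [mul_assoc]
    rw [lhs_eq, hmain μ]
  · -- second relation
    have rhs_eq : z^2 * (x^2 * z^2)^(μ+1) * y^(2*(μ+1)+1)
        = (d * (d * d))^(μ+1) * y * x^2 := by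
      calc z^2 * (x^2 * z^2)^(μ+1) * y^(2*(μ+1)+1)
          = z^2 * ((x^2 * z^2)^(μ+1) * y^(2*(μ+1)+1)) := by simp only [mul_assoc]
        _ = z^2 * ((d * (d * d))^(μ+1) * y) := by rw [hPB (μ+1)]
        _ = (z^2 * (d * (d * d))^(μ+1)) * y := by simp only [mul_assoc]
        _ = ((d * (d * d))^(μ+1) * z^2) * y := by rw [CZ2 (μ+1)]
        _ = (d * (d * d))^(μ+1) * (z^2 * y) := by simp only [mul_assoc]
        _ = (d * (d * d))^(μ+1) * (y * x^2) := by rw [K1]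
        _ = (d * (d * d))^(μ+1) * y * x^2 := by simp only [mul_assoc]
    rw [rhs_eq, hmain μ]

end CrispParis

def bandS (n i j : ℕ) : BraidGroup n := band n (min i j) (max i j)

def bandSubgroup (n : ℕ) (m : ℕ → ℕ → ℕ) : Subgroup (BraidGroup n) :=
  Subgroup.closure {x | ∃ i j, 1 ≤ i ∧ i < j ∧ j ≤ n ∧ x = band n i j ^ m i j}

def bp (n : ℕ) (m : ℕ → ℕ → ℕ) (i j : ℕ) : BraidGroup n := bandS n i j ^ m i j

lemma bp_of_lt (n : ℕ) (m : ℕ → ℕ → ℕ) {i j : ℕ} (h : i < j) :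
    bp n m i j = band n i j ^ m i j := by
  rw [bp, bandS, min_eq_left h.le, max_eq_right h.le]

lemma bp_of_gt (n : ℕ) (m : ℕ → ℕ → ℕ) {i j : ℕ} (h : j < i) :
    bp n m i j = band n j i ^ m i j := by
  rw [bp, bandS, min_eq_right h.le, max_eq_left h.le]

theorem stmt15 (n : ℕ) (m : ℕ → ℕ → ℕ)
    (hsym : ∀ i j, m i j = m j i)
    (hM : ∀ i j, 1 ≤ i → i ≤ n → 1 ≤ j → j ≤ n → i ≠ j → 2 ≤ m i j)
    (i j k : ℕ) (hcyc : (i < j ∧ j < k) ∨ (j < k ∧ k < i) ∨ (k < i ∧ i < j))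
    (hi1 : 1 ≤ i) (hj1 : 1 ≤ j) (hk1 : 1 ≤ k) (hin : i ≤ n) (hjn : j ≤ n) (hkn : k ≤ n)
    (ν : ℕ) (hν : 1 ≤ ν) (hij : m i j = 2) (hik : m i k = 2) (hjk : m j k = 2 * ν + 1) :
    bp n m i k * (bp n m i j * bp n m i k) ^ (ν - 1) * bp n m j k * bp n m i j * bp n m i k =
        (bp n m i j * bp n m i k) ^ ν * bp n m j k * bp n m i j ∧
    (bp n m i j * bp n m i k) ^ ν * bp n m j k * bp n m i j =
        bp n m i k * (bp n m i j * bp n m i k) ^ ν * bp n m j k := by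
  obtain ⟨μ, rfl⟩ : ∃ μ, ν = μ + 1 := ⟨ν - 1, by omega⟩
  have hν1 : μ + 1 - 1 = μ := by omega
  rcases hcyc with ⟨h1, h2⟩ | ⟨h1, h2⟩ | ⟨h1, h2⟩
  · -- i < j < k : x = a_{ij}, y = a_{jk}, z = a_{ik}
    obtain ⟨t1, t2⟩ := band_triple n hi1 h1 h2 hkn
    have e1 : bp n m i j = band n i j ^ 2 := by rw [bp_of_lt n m h1, hij]
    have e2 : bp n m i k = band n i k ^ 2 := by rw [bp_of_lt n m (h1.trans h2), hik]
    have e3 : bp n m j k = band n j k ^ (2 * (μ + 1) + 1) := by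
      rw [bp_of_lt n m h2, hjk]
    rw [e1, e2, e3, hν1]
    exact crisp_paris (band n i j) (band n j k) (band n i k) t1 t2 μ
  · -- j < k < i : triple (j,k,i): x = a_{jk}, y = a_{ki}, z = a_{ji}
    obtain ⟨t1, t2⟩ := band_triple n hj1 h1 h2 hin
    have e1 : bp n m i j = band n j i ^ 2 := by rw [bp_of_gt n m (h1.trans h2), hij]
    have e2 : bp n m i k = band n k i ^ 2 := by rw [bp_of_gt n m h2, hik]
    have e3 : bp n m j k = band n j k ^ (2 * (μ + 1) + 1) := by
      rw [bp_of_lt n m h1, hjk]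
    rw [e1, e2, e3, hν1]
    exact crisp_paris (band n j i) (band n j k) (band n k i) t2 (t1.trans t2).symm μ
  · -- k < i < j : triple (k,i,j): x = a_{ki}, y = a_{ij}, z = a_{kj}
    obtain ⟨t1, t2⟩ := band_triple n hk1 h1 h2 hjn
    have e1 : bp n m i j = band n i j ^ 2 := by rw [bp_of_lt n m h2, hij]
    have e2 : bp n m i k = band n k i ^ 2 := by rw [bp_of_gt n m h1, hik]
    have e3 : bp n m j k = band n k j ^ (2 * (μ + 1) + 1) := by
      rw [bp_of_gt n m (h1.trans h2), hjk]
    rw [e1, e2, e3, hν1]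
    exact crisp_paris (band n i j) (band n k j) (band n k i) (t1.trans t2).symm t1 μ
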